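/- arXiv:1901.05721 — 2 statements merged into one kernel-verified Lean document; each statement's English description precedes it below -/
import Mathlib

section
/- Let G be a full rank k × n binary matrix and let H be any (n−k) × n binary matrix of rank n−k with G·Hᵀ = 0. Then for any set S of k column indices, the columns of G indexed by S are linearly independent if and only if the columns of H indexed by the complement of S are linearly independent. Consequently the number of invertible k × k column-submatrices of G equals the number of invertible (n−k) × (n−k) column-submatrices of H. -/
open scoped Classical
open Matrix

/-- The columns of `M` indexed by `S` are linearly independent over `F₂`. -/
def colsIndep {r n : ℕ} (M : Matrix (Fin r) (Fin n) (ZMod 2)) (S : Finset (Fin n)) : Prop :=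
  LinearIndependent (ZMod 2) (fun j : {x // x ∈ S} => fun i => M i j.val)

/-- The number of `c`-element sets of column indices of `M` giving linearly independent
columns (equivalently, invertible `c × c` submatrices). -/
noncomputable def numInvertibleSub {r n : ℕ} (M : Matrix (Fin r) (Fin n) (ZMod 2))
    (c : ℕ) : ℕ :=
  ((Finset.univ.powersetCard c).filter (fun S => colsIndep M S)).card

/-- A finite sum of columns with coefficients equals a matrix-vector product with the
coefficient vector extended by zero. -/
lemma sum_cols_eq_mulVec {r n : ℕ} (M : Matrix (Fin r) (Fin n) (ZMod 2))
    (T : Finset (Fin n)) (g : {x // x ∈ T} → ZMod 2) :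
    (∑ j : {x // x ∈ T}, g j • (fun i => M i j.val)) =
      M.mulVec (fun j => if h : j ∈ T then g ⟨j, h⟩ else 0) := by
  funext i
  have h1 : M.mulVec (fun j => if h : j ∈ T then g ⟨j, h⟩ else 0) i
      = ∑ j ∈ T, M i j * (if h : j ∈ T then g ⟨j, h⟩ else 0) := by
    rw [Matrix.mulVec, dotProduct]
    exact (Finset.sum_subset (Finset.subset_univ T) (by intro j _ hj; simp [hj])).symm
  rw [h1, ← Finset.sum_attach T (fun j => M i j * (if h : j ∈ T then g ⟨j, h⟩ else 0))]
  simp [Finset.sum_apply, mul_comm]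

/-- `colsIndep` in terms of supported kernel vectors. -/
lemma colsIndep_iff_mulVec {r n : ℕ} (M : Matrix (Fin r) (Fin n) (ZMod 2))
    (T : Finset (Fin n)) :
    colsIndep M T ↔ ∀ v : Fin n → ZMod 2, (∀ j ∉ T, v j = 0) → M.mulVec v = 0 → v = 0 := by
  rw [colsIndep, Fintype.linearIndependent_iff]
  constructor
  · intro h v hv hMv
    have hg := h (fun j => v j.val) ?_
    · funext j
      by_cases hj : j ∈ T
      · exact hg ⟨j, hj⟩
      · exact hv j hj
    · rw [sum_cols_eq_mulVec]
      convert hMv using 2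
      funext j
      by_cases hj : j ∈ T
      · simp [hj]
      · simp [hj, hv j hj]
  · intro h g hg
    have h0 : (fun j => if hj : j ∈ T then g ⟨j, hj⟩ else 0) = 0 := by
      apply h
      · intro j hj; simp [hj]
      · rw [← sum_cols_eq_mulVec, hg]
    intro i
    have := congrFun h0 i.val
    simpa [i.2] using this

/-- Let `G` be a full-rank `k × n` binary matrix (`n = k + m ≥ k`) and `H`
any `m × n` binary matrix of rank `m = n − k` with `G · Hᵀ = 0`. Then a set `S` of `k`
column indices gives independent columns in `G` iff its complement gives independent
columns in `H`; consequently the numbers of invertible column-submatrices agree. -/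
theorem stmt_6 {k m : ℕ} (G : Matrix (Fin k) (Fin (k + m)) (ZMod 2))
    (H : Matrix (Fin m) (Fin (k + m)) (ZMod 2))
    (hG : G.rank = k) (hH : H.rank = m) (horth : G * H.transpose = 0) :
    (∀ S : Finset (Fin (k + m)), S.card = k → (colsIndep G S ↔ colsIndep H Sᶜ)) ∧
      numInvertibleSub G k = numInvertibleSub H m := by
  have hHG : H * Gᵀ = 0 := by
    have := congrArg Matrix.transpose horth
    simpa [Matrix.transpose_mul] using this
  -- kernel of H = range of Gᵀ
  have hker : LinearMap.range (Gᵀ.mulVecLin) = LinearMap.ker (H.mulVecLin) := by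
    apply Submodule.eq_of_le_of_finrank_le
    · rintro _ ⟨x, rfl⟩
      simp only [LinearMap.mem_ker, Matrix.mulVecLin_apply, Matrix.mulVec_mulVec, hHG,
        Matrix.zero_mulVec]
    · have h1 : Module.finrank (ZMod 2) (LinearMap.range Gᵀ.mulVecLin) = k := by
        have : Gᵀ.rank = k := by rw [Matrix.rank_transpose, hG]
        exact this
      have h2 := LinearMap.finrank_range_add_finrank_ker (H.mulVecLin)
      have h3 : Module.finrank (ZMod 2) (LinearMap.range H.mulVecLin) = m := hH
      have h4 : Module.finrank (ZMod 2) (Fin (k + m) → ZMod 2) = k + m := by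
        simp [Module.finrank_pi]
      omega
  -- Gᵀ.mulVec is injective
  have hinj : Function.Injective (Gᵀ.mulVec) := by
    rw [← Matrix.coe_mulVecLin, ← LinearMap.ker_eq_bot]
    have h2 := LinearMap.finrank_range_add_finrank_ker (Gᵀ.mulVecLin)
    have h1 : Module.finrank (ZMod 2) (LinearMap.range Gᵀ.mulVecLin) = k := by
      have : Gᵀ.rank = k := by rw [Matrix.rank_transpose, hG]
      exact this
    have h4 : Module.finrank (ZMod 2) (Fin k → ZMod 2) = k := by simp
    rw [← Submodule.finrank_eq_zero (R := ZMod 2)]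
    omega
  have main : ∀ S : Finset (Fin (k + m)), S.card = k → (colsIndep G S ↔ colsIndep H Sᶜ) := by
    intro S hS
    -- colsIndep G S ↔ no nonzero x with Gᵀ.mulVec x vanishing on S
    have e : Fin k ≃ {x // x ∈ S} := (S.equivFin.trans (finCongr hS)).symm
    have hGS : colsIndep G S ↔
        ∀ x : Fin k → ZMod 2, (∀ j ∈ S, Gᵀ.mulVec x j = 0) → x = 0 := by
      rw [colsIndep, ← linearIndependent_equiv e]
      set A : Matrix (Fin k) (Fin k) (ZMod 2) := fun i t => G i (e t).val with hA
      have hcols : ((fun j : {x // x ∈ S} => fun i => G i j.val) ∘ e)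
          = A.col := by
        funext t; rfl
      rw [hcols, Matrix.linearIndependent_cols_iff_isUnit,
        ← Matrix.vecMul_injective_iff_isUnit, ← Matrix.coe_vecMulLinear,
        ← LinearMap.ker_eq_bot, LinearMap.ker_eq_bot']
      have hvm : ∀ (x : Fin k → ZMod 2) (t : Fin k),
          A.vecMulLinear x t = Gᵀ.mulVec x (e t).val := by
        intro x t
        simp [Matrix.vecMulLinear_apply, Matrix.vecMul, Matrix.mulVec,
          dotProduct, hA, Matrix.transpose_apply, mul_comm]
        rfl
      constructor
      · intro h x hx
        apply h x
        funext t
        rw [hvm]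
        exact hx _ (e t).2
      · intro h x hx
        apply h x
        intro j hj
        have := congrFun hx (e.symm ⟨j, hj⟩)
        rwa [hvm, Equiv.apply_symm_apply] at this
    rw [hGS, colsIndep_iff_mulVec]
    simp only [Finset.notMem_compl]
    constructor
    · intro h v hv hMv
      have : v ∈ LinearMap.range (Gᵀ.mulVecLin) := by
        rw [hker]; exact hMv
      obtain ⟨x, rfl⟩ := this
      have : x = 0 := h x (fun j hj => hv j hj)
      simp [this]
    · intro h x hx
      have h0 : Gᵀ.mulVec x = 0 := by
        apply h
        · exact hx
        · have : Gᵀ.mulVec x ∈ LinearMap.ker (H.mulVecLin) := by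
            rw [← hker]; exact ⟨x, rfl⟩
          exact this
      exact hinj (by simpa using h0)
  refine ⟨main, ?_⟩
  unfold numInvertibleSub
  refine Finset.card_bij' (fun S _ => Sᶜ) (fun T _ => Tᶜ) ?_ ?_ ?_ ?_
  · intro S hS
    rw [Finset.mem_filter, Finset.mem_powersetCard_univ] at hS ⊢
    refine ⟨?_, ?_⟩
    · rw [Finset.card_compl, hS.1]; simp
    · exact (main S hS.1).mp hS.2
  · intro T hT
    rw [Finset.mem_filter, Finset.mem_powersetCard_univ] at hT ⊢
    have hc : Tᶜ.card = k := by
      rw [Finset.card_compl, hT.1]; simp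
    refine ⟨hc, ?_⟩
    have := (main Tᶜ hc)
    rw [compl_compl] at this
    exact this.mpr hT.2
  · intro S _; exact compl_compl S
  · intro T _; exact compl_compl T
end

section
/- Let G be a full rank k × n binary matrix (n ≥ k) with dual code C⊥ of minimum weight d*, and suppose 3d*/2 > max(k, n−k) and k ≥ n−k. Then the number D of k-element subsets S of {1,…,n} whose corresponding k × k submatrix of G is singular equals D = Σ_{d=d*}^{k} A_d · C(n−d, n−k), where A_d is the number of codewords of Hamming weight d in C⊥. -/
open scoped Classical

/-- Hamming weight of a binary vector. -/
def wt {n : ℕ} (v : Fin n → ZMod 2) : ℕ :=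
  (Finset.univ.filter (fun i => v i ≠ 0)).card

/-- The columns of `M` indexed by `S` are linearly dependent over `F₂`. -/
def colsDep {k n : ℕ} (M : Matrix (Fin k) (Fin n) (ZMod 2)) (S : Finset (Fin n)) : Prop :=
  ∃ c : Fin n → ZMod 2, c ≠ 0 ∧ (∀ j, c j ≠ 0 → j ∈ S) ∧ M.mulVec c = 0

/-- Number of `k`-element column subsets of `G` that are linearly dependent
(i.e. singular `k × k` column-submatrices). -/
noncomputable def numSingularSub {k n : ℕ} (G : Matrix (Fin k) (Fin n) (ZMod 2)) : ℕ :=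
  ((Finset.univ.powersetCard k).filter (fun S => colsDep G S)).card

/-- Weight enumerator coefficient `A_d` of the dual code `C⊥ = {v : G·v = 0}`:
the number of dual codewords of Hamming weight exactly `d`. -/
noncomputable def dualWEC {k n : ℕ} (G : Matrix (Fin k) (Fin n) (ZMod 2)) (d : ℕ) : ℕ :=
  ((Finset.univ : Finset (Fin n → ZMod 2)).filter
    (fun v => G.mulVec v = 0 ∧ wt v = d)).card

/-- The support of a vector as a finset. -/
noncomputable def supp {n : ℕ} (v : Fin n → ZMod 2) : Finset (Fin n) :=
  Finset.univ.filter (fun i => v i ≠ 0)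

lemma supp_card {n : ℕ} (v : Fin n → ZMod 2) : (supp v).card = wt v := rfl

lemma wt_eq_zero_iff {n : ℕ} (v : Fin n → ZMod 2) : wt v = 0 ↔ v = 0 := by
  constructor
  · intro h
    funext i
    show v i = 0
    by_contra hi
    have hmem : i ∈ Finset.univ.filter (fun i => v i ≠ 0) := by
      simp [hi]
    have hpos := Finset.card_pos.mpr ⟨i, hmem⟩
    rw [wt] at h
    omega
  · intro h; subst h; simp [wt]

lemma supp_add {n : ℕ} (v w : Fin n → ZMod 2) :
    supp (v + w) = (supp v \ supp w) ∪ (supp w \ supp v) := by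
  ext i
  simp only [supp, Finset.mem_filter, Finset.mem_univ, true_and, Finset.mem_union,
    Finset.mem_sdiff, Pi.add_apply]
  revert i
  intro i
  rcases (by decide : ∀ a b : ZMod 2, (a + b ≠ 0 ↔ (a ≠ 0 ∧ ¬ b ≠ 0) ∨ (b ≠ 0 ∧ ¬ a ≠ 0)))
      (v i) (w i) with h
  exact h

/-- Number of `k`-subsets of `Fin n` containing a fixed set `A`. -/
lemma count_supersets {n k : ℕ} (A : Finset (Fin n)) (hA : A.card ≤ k) :
    (((Finset.univ : Finset (Fin n)).powersetCard k).filter (fun S => A ⊆ S)).card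
      = (n - A.card).choose (k - A.card) := by
  have hcard : ((Finset.univ : Finset (Fin n)) \ A).card = n - A.card := by
    rw [Finset.card_sdiff_of_subset (Finset.subset_univ A)]
    simp
  rw [← hcard, ← Finset.card_powersetCard (k - A.card) (Finset.univ \ A)]
  apply Finset.card_bij' (fun S _ => S \ A) (fun B _ => B ∪ A)
  · intro S hS
    simp only [Finset.mem_filter, Finset.mem_powersetCard] at hS ⊢
    exact ⟨Finset.sdiff_subset_sdiff hS.1.1 le_rfl,
      by rw [Finset.card_sdiff_of_subset hS.2, hS.1.2]⟩
  · intro B hB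
    rw [Finset.mem_powersetCard] at hB
    have hdisj : Disjoint B A := by
      refine Finset.disjoint_left.mpr ?_
      intro a ha
      have := hB.1 ha
      simp only [Finset.mem_sdiff] at this
      exact this.2
    simp only [Finset.mem_filter, Finset.mem_powersetCard]
    refine ⟨⟨Finset.subset_univ _, ?_⟩, Finset.subset_union_right⟩
    rw [Finset.card_union_of_disjoint hdisj, hB.2]
    omega
  · intro S hS
    simp only [Finset.mem_filter] at hS
    exact Finset.sdiff_union_of_subset hS.2
  · intro B hB
    rw [Finset.mem_powersetCard] at hB
    have hdisj : Disjoint B A := by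
      refine Finset.disjoint_left.mpr ?_
      intro a ha
      have := hB.1 ha
      simp only [Finset.mem_sdiff] at this
      exact this.2
    exact Finset.union_sdiff_cancel_right hdisj

/-- For a full-rank `k × n` binary matrix `G` (`n ≥ k`) whose dual code has
minimum weight `d*` with `3d*/2 > max(k, n−k)` and `k ≥ n−k`, the number `D` of singular
`k × k` column-submatrices of `G` is `D = ∑_{d=d*}^{k} A_d · C(n−d, n−k)`. -/
theorem stmt_10 {k n dstar : ℕ} (hkn : k ≤ n) (hk2 : n - k ≤ k)
    (G : Matrix (Fin k) (Fin n) (ZMod 2)) (hrank : G.rank = k)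
    (hex : ∃ v : Fin n → ZMod 2, v ≠ 0 ∧ G.mulVec v = 0 ∧ wt v = dstar)
    (hmin : ∀ v : Fin n → ZMod 2, v ≠ 0 → G.mulVec v = 0 → dstar ≤ wt v)
    (h3k : 2 * k < 3 * dstar) (h3nk : 2 * (n - k) < 3 * dstar) :
    numSingularSub G = ∑ d ∈ Finset.Icc dstar k, dualWEC G d * (n - d).choose (n - k) := by
  -- dstar ≥ 1
  have hd1 : 1 ≤ dstar := by
    obtain ⟨v, hv0, hvC, hvw⟩ := hex
    rcases Nat.eq_zero_or_pos dstar with h | h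
    · exact absurd ((wt_eq_zero_iff v).mp (hvw.trans h)) hv0
    · exact h
  -- the set of relevant codewords
  set Cset : Finset (Fin n → ZMod 2) :=
    Finset.univ.filter (fun v => v ≠ 0 ∧ G.mulVec v = 0 ∧ wt v ≤ k) with hCset
  -- step 1: the dependent k-subsets are the disjoint union over codewords
  have hT : (Finset.univ.powersetCard k).filter (fun S => colsDep G S)
      = Cset.biUnion (fun v =>
          ((Finset.univ : Finset (Fin n)).powersetCard k).filter (fun S => supp v ⊆ S)) := by
    ext S
    simp only [Finset.mem_biUnion, Finset.mem_filter, Finset.mem_powersetCard, hCset,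
      Finset.mem_univ, true_and]
    constructor
    · rintro ⟨⟨hSu, hSk⟩, c, hc0, hcS, hcC⟩
      have hsupp : supp c ⊆ S := fun j hj => hcS j (by simpa [supp] using hj)
      refine ⟨c, ⟨hc0, hcC, ?_⟩, ⟨hSu, hSk⟩, hsupp⟩
      calc wt c = (supp c).card := rfl
        _ ≤ S.card := Finset.card_le_card hsupp
        _ = k := hSk
    · rintro ⟨v, ⟨hv0, hvC, _⟩, ⟨hSu, hSk⟩, hsupp⟩
      exact ⟨⟨hSu, hSk⟩, v, hv0, (fun j hj => hsupp (by simpa [supp] using hj)), hvC⟩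
  -- disjointness: a k-subset contains the support of at most one nonzero codeword
  have hdisj : ∀ v ∈ Cset, ∀ w ∈ Cset, v ≠ w →
      Disjoint (((Finset.univ : Finset (Fin n)).powersetCard k).filter (fun S => supp v ⊆ S))
        (((Finset.univ : Finset (Fin n)).powersetCard k).filter (fun S => supp w ⊆ S)) := by
    intro v hv w hw hvw
    simp only [hCset, Finset.mem_filter, Finset.mem_univ, true_and] at hv hw
    rw [Finset.disjoint_left]
    rintro S hS1 hS2
    simp only [Finset.mem_filter, Finset.mem_powersetCard] at hS1 hS2
    -- v + w is a nonzero codeword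
    have hvw0 : v + w ≠ 0 := by
      intro h
      apply hvw
      funext i
      have := congrFun h i
      simp only [Pi.add_apply, Pi.zero_apply] at this
      have : ∀ a b : ZMod 2, a + b = 0 → a = b := by decide
      exact this _ _ (by simpa using congrFun h i)
    have hvwC : G.mulVec (v + w) = 0 := by
      rw [Matrix.mulVec_add, hv.2.1, hw.2.1]; simp
    have h1 := hmin v hv.1 hv.2.1
    have h2 := hmin w hw.1 hw.2.1
    have h3 := hmin (v + w) hvw0 hvwC
    -- weight arithmetic
    have hwadd : wt (v + w) = (supp v \ supp w).card + (supp w \ supp v).card := by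
      rw [← supp_card, supp_add]
      exact Finset.card_union_of_disjoint (Finset.sdiff_disjoint.mono_right Finset.sdiff_subset)
    have e1 : (supp v \ supp w).card + (supp v ∩ supp w).card = (supp v).card :=
      Finset.card_sdiff_add_card_inter _ _
    have e2 : (supp w \ supp v).card + (supp w ∩ supp v).card = (supp w).card :=
      Finset.card_sdiff_add_card_inter _ _
    have e3 : (supp v ∪ supp w).card + (supp v ∩ supp w).card
        = (supp v).card + (supp w).card := Finset.card_union_add_card_inter _ _
    have e4 : (supp w ∩ supp v).card = (supp v ∩ supp w).card := by
      rw [Finset.inter_comm]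
    have hsub : (supp v ∪ supp w).card ≤ k := by
      rw [← hS1.1.2]
      exact Finset.card_le_card (Finset.union_subset hS1.2 hS2.2)
    have hv' : (supp v).card = wt v := supp_card v
    have hw' : (supp w).card = wt w := supp_card w
    omega
  -- compute the cardinality
  rw [numSingularSub, hT, Finset.card_biUnion hdisj]
  -- each term
  have hterm : ∀ v ∈ Cset,
      (((Finset.univ : Finset (Fin n)).powersetCard k).filter (fun S => supp v ⊆ S)).card
        = (n - wt v).choose (n - k) := by
    intro v hv
    simp only [hCset, Finset.mem_filter, Finset.mem_univ, true_and] at hv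
    rw [count_supersets (supp v) (by rw [supp_card]; exact hv.2.2), supp_card]
    have h1 : n - k ≤ n - wt v := by omega
    have h2 : (n - wt v) - (n - k) = k - wt v := by omega
    rw [← Nat.choose_symm h1, h2]
  rw [Finset.sum_congr rfl hterm]
  -- regroup by weight
  rw [← Finset.sum_fiberwise_of_maps_to' (g := wt) (t := Finset.Icc dstar k) (fun v hv => by
    simp only [hCset, Finset.mem_filter, Finset.mem_univ, true_and] at hv
    exact Finset.mem_Icc.mpr ⟨hmin v hv.1 hv.2.1, hv.2.2⟩)
    (fun d => (n - d).choose (n - k))]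
  refine Finset.sum_congr rfl (fun d hd => ?_)
  rw [Finset.sum_const, smul_eq_mul]
  congr 1
  rw [dualWEC]
  congr 1
  ext v
  simp only [hCset, Finset.filter_filter, Finset.mem_filter, Finset.mem_univ, true_and]
  rw [Finset.mem_Icc] at hd
  constructor
  · rintro ⟨⟨_, hC, _⟩, hwd⟩; exact ⟨hC, hwd⟩
  · rintro ⟨hC, hwd⟩
    refine ⟨⟨?_, hC, by omega⟩, hwd⟩
    intro h
    subst h
    have : wt (0 : Fin n → ZMod 2) = 0 := (wt_eq_zero_iff 0).mpr rfl
    omega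
end
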